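/- If G and H are finite abelian groups with isomorphic enhanced power graphs, then G and H are isomorphic as groups. -/

import Mathlib

open SimpleGraph

/-- The enhanced power graph of a group. -/
def enhancedPowerGraph (G : Type*) [Group G] : SimpleGraph G where
  Adj x y := x ≠ y ∧ ∃ z : G, x ∈ Subgroup.zpowers z ∧ y ∈ Subgroup.zpowers z
  symm := ⟨by rintro x y ⟨h, z, hx, hy⟩; exact ⟨h.symm, z, hy, hx⟩⟩
  loopless := ⟨by rintro x ⟨h, -⟩; exact h rfl⟩

/-- The (undirected) power graph of a group. -/
def powerGraph (G : Type*) [Group G] : SimpleGraph G where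
  Adj x y := x ≠ y ∧ (x ∈ Subgroup.zpowers y ∨ y ∈ Subgroup.zpowers x)
  symm := ⟨by rintro x y ⟨h, hz⟩; exact ⟨h.symm, hz.symm⟩⟩
  loopless := ⟨by rintro x ⟨h, -⟩; exact h rfl⟩

/-- The strong product of two simple graphs. -/
def strongProd {α β : Type*} (Γ : SimpleGraph α) (Δ : SimpleGraph β) :
    SimpleGraph (α × β) where
  Adj p q := (p.1 = q.1 ∧ Δ.Adj p.2 q.2) ∨ (Γ.Adj p.1 q.1 ∧ p.2 = q.2) ∨
    (Γ.Adj p.1 q.1 ∧ Δ.Adj p.2 q.2)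
  symm := ⟨by
    rintro ⟨a, b⟩ ⟨c, d⟩ (⟨h1, h2⟩ | ⟨h1, h2⟩ | ⟨h1, h2⟩)
    · exact Or.inl ⟨h1.symm, h2.symm⟩
    · exact Or.inr (Or.inl ⟨h1.symm, h2.symm⟩)
    · exact Or.inr (Or.inr ⟨h1.symm, h2.symm⟩)⟩
  loopless := ⟨by
    rintro ⟨a, b⟩ (⟨-, h⟩ | ⟨h, -⟩ | ⟨h, -⟩) <;> exact h.ne rfl⟩

/-- The automorphism group of a simple graph, as a subgroup of permutations. -/
def graphAut {V : Type*} (Γ : SimpleGraph V) : Subgroup (Equiv.Perm V) where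
  carrier := {σ | ∀ x y, Γ.Adj (σ x) (σ y) ↔ Γ.Adj x y}
  one_mem' := fun _ _ => Iff.rfl
  mul_mem' := by
    intro σ τ hσ hτ x y
    simpa [Equiv.Perm.mul_apply] using (hσ (τ x) (τ y)).trans (hτ x y)
  inv_mem' := by
    intro σ hσ x y
    simpa using (hσ (σ⁻¹ x) (σ⁻¹ y)).symm

/-- A subgroup is maximal cyclic if it is maximal among cyclic subgroups. -/
def IsMaxCyclic {G : Type*} [Group G] (C : Subgroup G) : Prop :=
  Maximal (fun K : Subgroup G => ∃ g : G, K = Subgroup.zpowers g) C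

/-- The closed neighborhood of a vertex. -/
def closedNbhd {V : Type*} (Γ : SimpleGraph V) (x : V) : Set V :=
  Γ.neighborSet x ∪ {x}

/- ===== auxiliary development ===== -/

open Finset Subgroup

set_option linter.unusedSectionVars false

section CyclicCount

lemma myCyclicCardPowEqOne (K : Type*) [Group K] [Fintype K] [IsCyclic K] [DecidableEq K]
    (n : ℕ) :
    #(Finset.univ.filter fun a : K => a ^ n = 1) = Nat.gcd n (Fintype.card K) := by
  rcases eq_or_ne n 0 with rfl | hn
  · simp [Finset.filter_true_of_mem, Finset.card_univ]
  · rw [← sum_card_orderOf_eq_card_pow_eq_one (G := K) hn]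
    have hset : n.divisors.filter (· ∣ Fintype.card K) = (Nat.gcd n (Fintype.card K)).divisors := by
      ext m
      simp only [Finset.mem_filter, Nat.mem_divisors, Nat.dvd_gcd_iff]
      constructor
      · rintro ⟨⟨h1, h2⟩, h3⟩; exact ⟨⟨h1, h3⟩, Nat.gcd_ne_zero_left h2⟩
      · rintro ⟨⟨h1, h3⟩, -⟩; exact ⟨⟨h1, hn⟩, h3⟩
    calc ∑ m ∈ n.divisors, #(Finset.univ.filter fun x : K => orderOf x = m)
        = ∑ m ∈ n.divisors.filter (· ∣ Fintype.card K),
            #(Finset.univ.filter fun x : K => orderOf x = m) := by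
          refine (Finset.sum_filter_of_ne ?_).symm
          intro m hm h
          rcases Finset.card_pos.1 (Nat.pos_of_ne_zero h) with ⟨x, hx⟩
          exact (Finset.mem_filter.1 hx).2 ▸ orderOf_dvd_card
      _ = ∑ m ∈ n.divisors.filter (· ∣ Fintype.card K), Nat.totient m :=
          Finset.sum_congr rfl fun m hm =>
            IsCyclic.card_orderOf_eq_totient (Finset.mem_filter.1 hm).2
      _ = ∑ m ∈ (Nat.gcd n (Fintype.card K)).divisors, Nat.totient m := by rw [hset]
      _ = Nat.gcd n (Fintype.card K) := Nat.sum_totient _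

lemma myCyclicNatCardPowEqOne (K : Type*) [Group K] [Fintype K] [IsCyclic K] (n : ℕ) :
    Nat.card {a : K // a ^ n = 1} = Nat.gcd n (Fintype.card K) := by
  classical
  rw [Nat.card_eq_fintype_card, Fintype.card_subtype]
  exact myCyclicCardPowEqOne K n

lemma mySubgroupCardPowEqOne (G : Type*) [Group G] [Fintype G] [DecidableEq G]
    (K : Subgroup G) (hK : IsCyclic K) (A : Finset G) (hA : (A : Set G) = (K : Set G)) (n : ℕ) :
    #(A.filter fun x => x ^ n = 1) = Nat.gcd n A.card := by
  classical
  have hmem : ∀ x : G, x ∈ A ↔ x ∈ K := by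
    intro x
    constructor
    · intro hx; have : x ∈ (A : Set G) := hx; rw [hA] at this; exact this
    · intro hx; have : x ∈ (A : Set G) := by rw [hA]; exact hx
      exact this
  have e : {a : ↥K // a ^ n = 1} ≃ {x : G // x ∈ A.filter fun x => x ^ n = 1} :=
    { toFun := fun a => ⟨↑a.1, by
        simp only [Finset.mem_filter]
        exact ⟨(hmem _).2 a.1.2, by simpa [Subtype.ext_iff] using a.2⟩⟩
      invFun := fun x => ⟨⟨x.1, by
        have := x.2; simp only [Finset.mem_filter] at this; exact (hmem _).1 this.1⟩, by
        have := x.2; simp only [Finset.mem_filter] at this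
        exact Subtype.ext (by simpa using this.2)⟩
      left_inv := fun a => by ext; rfl
      right_inv := fun x => by ext; rfl }
  have e2 : (A : Finset G) ≃ ↥K :=
    { toFun := fun a => ⟨↑a, (hmem _).1 a.2⟩
      invFun := fun a => ⟨↑a, (hmem _).2 a.2⟩
      left_inv := fun a => by ext; rfl
      right_inv := fun a => by ext; rfl }
  have h1 : #(A.filter fun x => x ^ n = 1) = Fintype.card {a : ↥K // a ^ n = 1} := by
    rw [Fintype.card_congr e, ← Fintype.card_coe]
  have h2 : A.card = Fintype.card ↥K := by
    rw [← Fintype.card_coe]; exact Fintype.card_congr e2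
  rw [h1, h2, Fintype.card_subtype, myCyclicCardPowEqOne]

end CyclicCount

section MaxCyclic

variable {G : Type*} [Group G] [Fintype G]

lemma myMemClosedNbhd {V : Type*} (Γ : SimpleGraph V) (x y : V) :
    y ∈ closedNbhd Γ x ↔ Γ.Adj x y ∨ y = x := by
  simp [closedNbhd, SimpleGraph.mem_neighborSet, or_comm]

lemma myExistsMaxCyclicMem (x : G) : ∃ C : Subgroup G, IsMaxCyclic C ∧ x ∈ C := by
  classical
  have hfin : ({K : Subgroup G | (∃ g : G, K = zpowers g) ∧ x ∈ K}).Finite :=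
    Set.toFinite _
  have hne : (zpowers x) ∈ {K : Subgroup G | (∃ g : G, K = zpowers g) ∧ x ∈ K} :=
    ⟨⟨x, rfl⟩, mem_zpowers x⟩
  obtain ⟨C, hC, hmax⟩ := Set.Finite.exists_maximalFor id _ hfin ⟨_, hne⟩
  refine ⟨C, ⟨hC.1, ?_⟩, hC.2⟩
  intro K hK hCK
  have hKmem : K ∈ {K : Subgroup G | (∃ g : G, K = zpowers g) ∧ x ∈ K} :=
    ⟨hK, hCK hC.2⟩
  exact hmax hKmem hCK

lemma myClosedNbhdOfMaxCyclic {C : Subgroup G} (hC : IsMaxCyclic C) {g : G}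
    (hg : C = zpowers g) : closedNbhd (enhancedPowerGraph G) g = (C : Set G) := by
  ext y
  rw [myMemClosedNbhd]
  constructor
  · rintro (⟨-, z, hgz, hyz⟩ | rfl)
    · have hle : C ≤ zpowers z := by
        rw [hg]; exact (zpowers_le).2 hgz
      have := hC.2 ⟨z, rfl⟩ hle
      exact this hyz
    · rw [hg]; exact mem_zpowers _
  · intro hy
    by_cases hxy : y = g
    · exact Or.inr hxy
    · exact Or.inl ⟨Ne.symm hxy, g, mem_zpowers g, by rwa [hg] at hy⟩

lemma myPairwiseOfSubgroupCyclic {C : Subgroup G} {g : G} (hg : C = zpowers g) :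
    ((C : Set G)).Pairwise (enhancedPowerGraph G).Adj := by
  intro a ha b hb hab
  exact ⟨hab, g, by rwa [hg] at ha, by rwa [hg] at hb⟩

lemma myCliqueNbhdIff (A : Set G) :
    ((∃ x, A = closedNbhd (enhancedPowerGraph G) x) ∧ A.Pairwise (enhancedPowerGraph G).Adj)
      ↔ ∃ C : Subgroup G, IsMaxCyclic C ∧ A = (C : Set G) := by
  constructor
  · rintro ⟨⟨x, rfl⟩, hpw⟩
    obtain ⟨C, hC, hxC⟩ := myExistsMaxCyclicMem x
    obtain ⟨g, hg⟩ := hC.1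
    refine ⟨C, hC, ?_⟩
    have hsub : (C : Set G) ⊆ closedNbhd (enhancedPowerGraph G) x := by
      intro y hy
      rw [myMemClosedNbhd]
      by_cases hxy : y = x
      · exact Or.inr hxy
      · exact Or.inl ⟨Ne.symm hxy, g, by rwa [hg] at hxC, by rwa [hg] at hy⟩
    have hgmem : g ∈ closedNbhd (enhancedPowerGraph G) x := hsub (by rw [hg]; exact mem_zpowers _)
    ext y
    constructor
    · intro hy
      by_cases hyg : y = g
      · subst hyg; rw [hg]; exact mem_zpowers _
      · have hadj : (enhancedPowerGraph G).Adj y g := hpw hy hgmem hyg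
        obtain ⟨-, z, hyz, hgz⟩ := hadj
        have hle : C ≤ zpowers z := by rw [hg]; exact (zpowers_le).2 hgz
        exact hC.2 ⟨z, rfl⟩ hle hyz
    · exact fun hy => hsub hy
  · rintro ⟨C, hC, rfl⟩
    obtain ⟨g, hg⟩ := hC.1
    exact ⟨⟨g, (myClosedNbhdOfMaxCyclic hC hg).symm⟩, myPairwiseOfSubgroupCyclic hg⟩

end MaxCyclic

section IE
variable {G : Type*} [Group G] [Fintype G] [DecidableEq G]

noncomputable def cnbhds (G : Type*) [Group G] [Fintype G] : Finset (Finset G) :=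
  @Finset.filter _
    (fun A : Finset G => (∃ x, (A : Set G) = closedNbhd (enhancedPowerGraph G) x) ∧
      ((A : Set G)).Pairwise (enhancedPowerGraph G).Adj)
    (Classical.decPred _) Finset.univ

lemma mem_cnbhds {A : Finset G} :
    A ∈ cnbhds G ↔ ∃ C : Subgroup G, IsMaxCyclic C ∧ (A : Set G) = (C : Set G) := by
  simp only [cnbhds, Finset.mem_filter, Finset.mem_univ, true_and]
  exact myCliqueNbhdIff _

lemma myIsCyclicZpowers (g : G) : IsCyclic ↥(Subgroup.zpowers g) := by
  refine ⟨⟨⟨g, mem_zpowers g⟩, ?_⟩⟩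
  rintro ⟨x, hx⟩
  obtain ⟨k, hk⟩ := hx
  exact ⟨k, Subtype.ext (by simpa using hk)⟩

lemma myInfCyclic {t : Finset (Finset G)} (ht : t.Nonempty) (hsub : t ⊆ cnbhds G) :
    ∃ K : Subgroup G, IsCyclic ↥K ∧ ((t.inf id : Finset G) : Set G) = (K : Set G) := by
  induction ht using Finset.Nonempty.cons_induction with
  | singleton A =>
    obtain ⟨C, hC, hAC⟩ := mem_cnbhds.1 (hsub (Finset.mem_singleton_self A))
    obtain ⟨g, hg⟩ := hC.1
    refine ⟨C, by rw [hg]; exact myIsCyclicZpowers g, ?_⟩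
    rwa [Finset.inf_singleton, id]
  | cons A t hA ht ih =>
    have hsub' : t ⊆ cnbhds G := fun B hB => hsub (Finset.mem_cons_of_mem hB)
    obtain ⟨K, hK, hKt⟩ := ih hsub'
    obtain ⟨C, hC, hAC⟩ := mem_cnbhds.1 (hsub (Finset.mem_cons_self A t))
    refine ⟨C ⊓ K, Subgroup.isCyclic_of_le inf_le_right, ?_⟩
    rw [Finset.inf_cons]
    simp only [id_eq]
    have : ((A ⊓ t.inf id : Finset G) : Set G) = (A : Set G) ∩ (t.inf id : Finset G) := by
      simp [Finset.coe_inter]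
    rw [this, hAC, hKt]
    rfl

lemma myInfFilter {t : Finset (Finset G)} (ht : t.Nonempty) (p : G → Prop) [DecidablePred p] :
    t.inf (fun A => A.filter p) = (t.inf id).filter p := by
  obtain ⟨A0, hA0⟩ := id ht
  ext x
  rw [← Finset.inf'_eq_inf ht, ← Finset.inf'_eq_inf ht,
    Finset.mem_inf', Finset.mem_filter, Finset.mem_inf']
  constructor
  · intro h
    exact ⟨fun A hA => (Finset.mem_filter.1 (h A hA)).1, (Finset.mem_filter.1 (h A0 hA0)).2⟩
  · rintro ⟨h1, h2⟩ A hA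
    exact Finset.mem_filter.2 ⟨h1 A hA, h2⟩

lemma myRootsEqBiUnion (n : ℕ) :
    Finset.univ.filter (fun x : G => x ^ n = 1) =
      (cnbhds G).biUnion (fun A => A.filter fun x => x ^ n = 1) := by
  classical
  ext x
  simp only [Finset.mem_biUnion, Finset.mem_filter, Finset.mem_univ, true_and]
  constructor
  · intro hx
    obtain ⟨C, hC, hxC⟩ := myExistsMaxCyclicMem x
    refine ⟨Finset.univ.filter (fun y => y ∈ C), mem_cnbhds.2 ⟨C, hC, by ext y; simp⟩, ?_, hx⟩
    simp [hxC]
  · rintro ⟨A, -, -, hx⟩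
    exact hx

lemma myCardRootsInt (n : ℕ) :
    ((Finset.univ.filter fun x : G => x ^ n = 1).card : ℤ) =
      ∑ t ∈ (cnbhds G).powerset.filter (·.Nonempty),
        (-1 : ℤ) ^ (#t + 1) * (Nat.gcd n #(t.inf id) : ℤ) := by
  rw [myRootsEqBiUnion n, Finset.inclusion_exclusion_card_biUnion]
  rw [← Finset.sum_coe_sort ((cnbhds G).powerset.filter (·.Nonempty))
      (fun t => (-1 : ℤ) ^ (#t + 1) * (Nat.gcd n #(t.inf id) : ℤ))]
  apply Finset.sum_congr rfl
  intro t _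
  have ht2 := t.2
  rw [Finset.mem_filter, Finset.mem_powerset] at ht2
  obtain ⟨hsub, hne⟩ := ht2
  rw [Finset.inf'_eq_inf, myInfFilter hne]
  congr 1
  obtain ⟨K, hK, hKset⟩ := myInfCyclic hne hsub
  rw [mySubgroupCardPowEqOne G K hK _ hKset n]

end IE

lemma myClosedNbhdImage {V W : Type*} {Γ : SimpleGraph V} {Δ : SimpleGraph W} (φ : Γ ≃g Δ)
    (x : V) : ⇑φ '' closedNbhd Γ x = closedNbhd Δ (φ x) := by
  ext y
  simp only [Set.mem_image, myMemClosedNbhd]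
  constructor
  · rintro ⟨w, hw | rfl, rfl⟩
    · exact Or.inl (φ.map_adj_iff.2 hw)
    · exact Or.inr rfl
  · intro h
    refine ⟨φ.symm y, ?_, φ.apply_symm_apply y⟩
    rcases h with h | rfl
    · exact Or.inl (φ.map_adj_iff.1 (by rwa [φ.apply_symm_apply]))
    · exact Or.inr (by simp)

lemma myPairwiseImage {V W : Type*} {Γ : SimpleGraph V} {Δ : SimpleGraph W} (φ : Γ ≃g Δ)
    {s : Set V} (h : s.Pairwise Γ.Adj) : (⇑φ '' s).Pairwise Δ.Adj := by
  rintro a ⟨a0, ha0, rfl⟩ b ⟨b0, hb0, rfl⟩ hne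
  exact φ.map_adj_iff.2 (h ha0 hb0 (fun e => hne (by rw [e])))

section Transport
variable {G H : Type*} [Group G] [Fintype G] [DecidableEq G] [Group H] [Fintype H] [DecidableEq H]

lemma myCnbhdsImage (φ : enhancedPowerGraph G ≃g enhancedPowerGraph H) {A : Finset G}
    (hA : A ∈ cnbhds G) : A.image ⇑φ ∈ cnbhds H := by
  simp only [cnbhds, Finset.mem_filter, Finset.mem_univ, true_and] at hA ⊢
  obtain ⟨⟨x, hx⟩, hpw⟩ := hA
  refine ⟨⟨φ x, by rw [Finset.coe_image, hx, myClosedNbhdImage]⟩, ?_⟩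
  rw [Finset.coe_image]
  exact myPairwiseImage φ hpw

lemma myInfImageEq {t : Finset (Finset G)} (ht : t.Nonempty) (φ : G ≃ H) :
    (t.image (Finset.image ⇑φ)).inf id = (t.inf id).image ⇑φ := by
  rw [Finset.inf_image]
  ext y
  rw [← Finset.inf'_eq_inf ht, Finset.mem_inf']
  simp only [Finset.mem_image, Function.comp_apply, id_eq]
  constructor
  · intro h
    refine ⟨φ.symm y, ?_, φ.apply_symm_apply y⟩
    rw [← Finset.inf'_eq_inf ht, Finset.mem_inf']
    intro A hA
    obtain ⟨u, hu, hu2⟩ := h A hA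
    rwa [← hu2, Equiv.symm_apply_apply]
  · rintro ⟨w, hw, rfl⟩ A hA
    rw [← Finset.inf'_eq_inf ht, Finset.mem_inf'] at hw
    exact ⟨w, hw A hA, rfl⟩

lemma mySumTransport (φ : enhancedPowerGraph G ≃g enhancedPowerGraph H) (n : ℕ) :
    (∑ t ∈ (cnbhds G).powerset.filter (·.Nonempty),
        (-1 : ℤ) ^ (#t + 1) * (Nat.gcd n #(t.inf id) : ℤ))
      = ∑ t ∈ (cnbhds H).powerset.filter (·.Nonempty),
        (-1 : ℤ) ^ (#t + 1) * (Nat.gcd n #(t.inf id) : ℤ) := by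
  refine Finset.sum_nbij' (fun t => t.image (Finset.image ⇑φ))
    (fun t => t.image (Finset.image ⇑φ.symm)) ?_ ?_ ?_ ?_ ?_
  · intro t ht
    rw [Finset.mem_filter, Finset.mem_powerset] at ht ⊢
    exact ⟨fun B hB => by
      obtain ⟨A, hA, rfl⟩ := Finset.mem_image.1 hB
      exact myCnbhdsImage φ (ht.1 hA), Finset.image_nonempty.2 ht.2⟩
  · intro t ht
    rw [Finset.mem_filter, Finset.mem_powerset] at ht ⊢
    exact ⟨fun B hB => by
      obtain ⟨A, hA, rfl⟩ := Finset.mem_image.1 hB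
      exact myCnbhdsImage φ.symm (ht.1 hA), Finset.image_nonempty.2 ht.2⟩
  · intro t ht
    show (t.image (Finset.image ⇑φ)).image (Finset.image ⇑φ.symm) = t
    rw [Finset.image_image]
    have h1 : (Finset.image ⇑φ.symm ∘ Finset.image ⇑φ) = fun A : Finset G => A := by
      funext A
      rw [Function.comp_apply, Finset.image_image]
      have : (⇑φ.symm ∘ ⇑φ) = fun a : G => a := by
        funext a; simp
      rw [this, Finset.image_id']
    rw [h1, Finset.image_id']
  · intro t ht
    show (t.image (Finset.image ⇑φ.symm)).image (Finset.image ⇑φ) = t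
    rw [Finset.image_image]
    have h1 : (Finset.image ⇑φ ∘ Finset.image ⇑φ.symm) = fun A : Finset H => A := by
      funext A
      rw [Function.comp_apply, Finset.image_image]
      have : (⇑φ ∘ ⇑φ.symm) = fun a : H => a := by
        funext a; simp
      rw [this, Finset.image_id']
    rw [h1, Finset.image_id']
  · intro t ht
    rw [Finset.mem_filter, Finset.mem_powerset] at ht
    have hinj : Function.Injective (Finset.image ⇑φ : Finset G → Finset H) :=
      Finset.image_injective (RelIso.injective φ)
    show (-1 : ℤ) ^ (#t + 1) * (Nat.gcd n #(t.inf id) : ℤ) =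
      (-1 : ℤ) ^ (#(t.image (Finset.image ⇑φ)) + 1) *
        (Nat.gcd n #((t.image (Finset.image ⇑φ)).inf id) : ℤ)
    have h2 : (t.image (Finset.image ⇑φ)).inf id = (t.inf id).image ⇑φ :=
      myInfImageEq ht.2 φ.toEquiv
    rw [Finset.card_image_of_injective _ hinj, h2,
      Finset.card_image_of_injective _ (RelIso.injective φ)]

end Transport

/-- number of n-th roots of 1 -/
noncomputable def rc (G : Type*) [Monoid G] (n : ℕ) : ℕ := Nat.card {x : G // x ^ n = 1}

lemma rc_mulEquiv {G H : Type*} [Group G] [Group H] (f : G ≃* H) (n : ℕ) : rc G n = rc H n := by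
  refine Nat.card_congr (Equiv.subtypeEquiv f.toEquiv fun x => ?_)
  show x ^ n = 1 ↔ f x ^ n = 1
  rw [← map_pow, MulEquiv.map_eq_one_iff]

lemma rc_pi {ι : Type} [Fintype ι] (M : ι → Type*) [∀ i, Group (M i)] (n : ℕ) :
    rc ((i : ι) → M i) n = ∏ i, rc (M i) n := by
  simp only [rc]
  rw [← Nat.card_pi]
  refine Nat.card_congr ?_
  refine (Equiv.subtypeEquiv (Equiv.refl _) fun f => ?_).trans (Equiv.subtypePiEquivPi)
  simp only [Equiv.refl_apply]
  rw [funext_iff]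
  refine forall_congr' fun i => ?_
  simp [Pi.pow_apply]

lemma rc_zmod (m : ℕ) [NeZero m] (n : ℕ) : rc (Multiplicative (ZMod m)) n = Nat.gcd n m := by
  have hcard : Fintype.card (Multiplicative (ZMod m)) = m :=
    (Fintype.card_congr Multiplicative.toAdd).trans (ZMod.card m)
  rw [rc, myCyclicNatCardPowEqOne, hcard]

/-- removing trivial factors from a product -/
def piRemoveTrivial {ι : Type} (M : ι → Type*) [∀ i, Group (M i)] (pr : ι → Prop)
    [DecidablePred pr] (htriv : ∀ i, ¬ pr i → Subsingleton (M i)) :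
    ((i : ι) → M i) ≃* ((i : {i // pr i}) → M i.1) where
  toFun f i := f i.1
  invFun g i := if h : pr i then g ⟨i, h⟩ else 1
  left_inv f := by
    funext i
    by_cases h : pr i
    · simp [h]
    · haveI := htriv i h
      exact Subsingleton.elim _ _
  right_inv g := by funext i; simp [i.2]
  map_mul' f g := rfl

/-- structure theorem, normal form -/
lemma myStructure (G : Type*) [CommGroup G] [Finite G] :
    ∃ (ι : Type) (_ : Fintype ι) (p e : ι → ℕ), (∀ i, (p i).Prime) ∧ (∀ i, e i ≠ 0) ∧
      Nonempty (G ≃* ((i : ι) → Multiplicative (ZMod (p i ^ e i)))) := by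
  classical
  obtain ⟨ι, fι, p, hp, e, ⟨f⟩⟩ := AddCommGroup.equiv_directSum_zmod_of_finite (Additive G)
  refine ⟨(Subtype fun i => e i ≠ 0), inferInstance, fun j => p j.1, fun j => e j.1,
    fun j => hp j.1, fun j => j.2, ⟨?_⟩⟩
  have e1 : G ≃* ((i : ι) → Multiplicative (ZMod (p i ^ e i))) :=
    MulEquiv.toAdditive.symm <| f.trans <|
      (DirectSum.addEquivProd _).trans <| MulEquiv.toAdditiveRight <| MulEquiv.piMultiplicative _
  refine e1.trans (piRemoveTrivial _ (fun i => e i ≠ 0) ?_)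
  intro i hi
  rw [not_not] at hi
  have h1 : p i ^ e i = 1 := by rw [hi, pow_zero]
  constructor
  intro a b
  have : Subsingleton (ZMod (p i ^ e i)) := by rw [h1]; infer_instance
  exact Subsingleton.elim a b

lemma gcd_prime_pow {r : ℕ} (hr : r.Prime) (k : ℕ) {p' : ℕ} (hp' : p'.Prime) (e' : ℕ) :
    Nat.gcd (r ^ k) (p' ^ e') = if p' = r then r ^ min k e' else 1 := by
  by_cases h : p' = r
  · subst h
    rw [if_pos rfl]
    rcases le_total k e' with hle | hle
    · rw [min_eq_left hle]; exact Nat.gcd_eq_left (pow_dvd_pow _ hle)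
    · rw [min_eq_right hle]; exact Nat.gcd_eq_right (pow_dvd_pow _ hle)
  · rw [if_neg h]
    exact Nat.Coprime.pow _ _ ((Nat.coprime_primes hr hp').2 fun hh => h hh.symm)

lemma main2 {G H : Type*} [CommGroup G] [CommGroup H] [Finite G] [Finite H]
    (hrc : ∀ n, rc G n = rc H n) : Nonempty (G ≃* H) := by
  classical
  obtain ⟨ι, fι, p, e, hp, he, ⟨fG⟩⟩ := myStructure G
  obtain ⟨κ, fκ, q, f, hq, hf, ⟨fH⟩⟩ := myStructure H
  have hrcG : ∀ n, rc G n = ∏ i, Nat.gcd n (p i ^ e i) := by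
    intro n
    rw [rc_mulEquiv fG, rc_pi]
    refine Finset.prod_congr rfl fun i _ => ?_
    haveI : NeZero (p i ^ e i) := ⟨pow_ne_zero _ (hp i).pos.ne'⟩
    exact rc_zmod _ n
  have hrcH : ∀ n, rc H n = ∏ j, Nat.gcd n (q j ^ f j) := by
    intro n
    rw [rc_mulEquiv fH, rc_pi]
    refine Finset.prod_congr rfl fun j _ => ?_
    haveI : NeZero (q j ^ f j) := ⟨pow_ne_zero _ (hq j).pos.ne'⟩
    exact rc_zmod _ n
  -- the "s" functions
  set sG : ℕ → ℕ → ℕ := fun r k => ∑ i ∈ univ.filter (fun i => p i = r), min k (e i) with hsG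
  set sH : ℕ → ℕ → ℕ := fun r k => ∑ j ∈ univ.filter (fun j => q j = r), min k (f j) with hsH
  have hprodG : ∀ r, r.Prime → ∀ k, rc G (r ^ k) = r ^ (sG r k) := by
    intro r hr k
    rw [hrcG]
    calc ∏ i, Nat.gcd (r ^ k) (p i ^ e i)
        = ∏ i, (if p i = r then r ^ min k (e i) else 1) :=
          Finset.prod_congr rfl fun i _ => gcd_prime_pow hr k (hp i) (e i)
      _ = ∏ i ∈ univ.filter (fun i => p i = r), r ^ min k (e i) :=
          (Finset.prod_filter _ _).symm
      _ = r ^ (sG r k) := by rw [Finset.prod_pow_eq_pow_sum]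
  have hprodH : ∀ r, r.Prime → ∀ k, rc H (r ^ k) = r ^ (sH r k) := by
    intro r hr k
    rw [hrcH]
    calc ∏ j, Nat.gcd (r ^ k) (q j ^ f j)
        = ∏ j, (if q j = r then r ^ min k (f j) else 1) :=
          Finset.prod_congr rfl fun j _ => gcd_prime_pow hr k (hq j) (f j)
      _ = ∏ j ∈ univ.filter (fun j => q j = r), r ^ min k (f j) :=
          (Finset.prod_filter _ _).symm
      _ = r ^ (sH r k) := by rw [Finset.prod_pow_eq_pow_sum]
  have hs : ∀ r, r.Prime → ∀ k, sG r k = sH r k := by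
    intro r hr k
    have h1 : r ^ (sG r k) = r ^ (sH r k) := by
      rw [← hprodG r hr k, ← hprodH r hr k, hrc]
    exact Nat.pow_right_injective hr.two_le h1
  -- counts of indices with exponent ≥ k
  set cG : ℕ → ℕ → ℕ := fun r k => #(univ.filter fun i => p i = r ∧ k ≤ e i) with hcG
  set cH : ℕ → ℕ → ℕ := fun r k => #(univ.filter fun j => q j = r ∧ k ≤ f j) with hcH
  have hstepG : ∀ r k, sG r (k + 1) = sG r k + cG r (k + 1) := by
    intro r k
    rw [hsG, hcG]
    simp only
    rw [← Finset.filter_filter, Finset.card_filter, ← Finset.sum_add_distrib]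
    refine Finset.sum_congr rfl fun i _ => ?_
    by_cases hke : k + 1 ≤ e i
    · rw [if_pos hke]; omega
    · rw [if_neg hke]; omega
  have hstepH : ∀ r k, sH r (k + 1) = sH r k + cH r (k + 1) := by
    intro r k
    rw [hsH, hcH]
    simp only
    rw [← Finset.filter_filter, Finset.card_filter, ← Finset.sum_add_distrib]
    refine Finset.sum_congr rfl fun j _ => ?_
    by_cases hke : k + 1 ≤ f j
    · rw [if_pos hke]; omega
    · rw [if_neg hke]; omega
  have hc : ∀ r, r.Prime → ∀ k, cG r (k + 1) = cH r (k + 1) := by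
    intro r hr k
    have h1 := hstepG r k
    have h2 := hstepH r k
    have h3 := hs r hr k
    have h4 := hs r hr (k + 1)
    omega
  -- exact counts
  set EG : ℕ → ℕ → ℕ := fun r k => #(univ.filter fun i => p i = r ∧ e i = k) with hEG
  set EH : ℕ → ℕ → ℕ := fun r k => #(univ.filter fun j => q j = r ∧ f j = k) with hEH
  have hsplitG : ∀ r k, cG r (k + 1) = EG r (k + 1) + cG r (k + 2) := by
    intro r k
    rw [hcG, hEG]
    simp only
    have hset : (univ.filter fun i => p i = r ∧ k + 1 ≤ e i) =
        (univ.filter fun i => p i = r ∧ e i = k + 1) ∪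
          (univ.filter fun i => p i = r ∧ k + 2 ≤ e i) := by
      ext i
      simp only [Finset.mem_filter, Finset.mem_union, Finset.mem_univ, true_and]
      constructor
      · rintro ⟨h1, h2⟩
        by_cases he' : e i = k + 1
        · exact Or.inl ⟨h1, he'⟩
        · exact Or.inr ⟨h1, by omega⟩
      · rintro (⟨h1, h2⟩ | ⟨h1, h2⟩) <;> exact ⟨h1, by omega⟩
    rw [hset, Finset.card_union_of_disjoint]
    rw [Finset.disjoint_left]
    intro i hi1 hi2
    simp only [Finset.mem_filter, Finset.mem_univ, true_and] at hi1 hi2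
    omega
  have hsplitH : ∀ r k, cH r (k + 1) = EH r (k + 1) + cH r (k + 2) := by
    intro r k
    rw [hcH, hEH]
    simp only
    have hset : (univ.filter fun j => q j = r ∧ k + 1 ≤ f j) =
        (univ.filter fun j => q j = r ∧ f j = k + 1) ∪
          (univ.filter fun j => q j = r ∧ k + 2 ≤ f j) := by
      ext j
      simp only [Finset.mem_filter, Finset.mem_union, Finset.mem_univ, true_and]
      constructor
      · rintro ⟨h1, h2⟩
        by_cases he' : f j = k + 1
        · exact Or.inl ⟨h1, he'⟩
        · exact Or.inr ⟨h1, by omega⟩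
      · rintro (⟨h1, h2⟩ | ⟨h1, h2⟩) <;> exact ⟨h1, by omega⟩
    rw [hset, Finset.card_union_of_disjoint]
    rw [Finset.disjoint_left]
    intro j hj1 hj2
    simp only [Finset.mem_filter, Finset.mem_univ, true_and] at hj1 hj2
    omega
  have hE : ∀ r, r.Prime → ∀ k, EG r (k + 1) = EH r (k + 1) := by
    intro r hr k
    have h1 := hsplitG r k
    have h2 := hsplitH r k
    have h3 := hc r hr k
    have h4 : cG r (k + 2) = cH r (k + 2) := hc r hr (k + 1)
    omega
  -- fiber cardinalities
  have hfib : ∀ v : ℕ × ℕ,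
      Fintype.card {i : ι // (p i, e i) = v} = Fintype.card {j : κ // (q j, f j) = v} := by
    rintro ⟨r, k⟩
    rw [Fintype.card_subtype, Fintype.card_subtype]
    have hG' : (univ.filter fun i : ι => (p i, e i) = (r, k)) =
        (univ.filter fun i => p i = r ∧ e i = k) := by
      refine Finset.filter_congr fun i _ => ?_
      rw [Prod.mk.injEq]
    have hH' : (univ.filter fun j : κ => (q j, f j) = (r, k)) =
        (univ.filter fun j => q j = r ∧ f j = k) := by
      refine Finset.filter_congr fun j _ => ?_
      rw [Prod.mk.injEq]
    rw [hG', hH']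
    rcases Nat.eq_zero_or_pos k with rfl | hk
    · have h1 : (univ.filter fun i : ι => p i = r ∧ e i = 0) = ∅ :=
        Finset.filter_eq_empty_iff.2 fun i _ hi => he i hi.2
      have h2 : (univ.filter fun j : κ => q j = r ∧ f j = 0) = ∅ :=
        Finset.filter_eq_empty_iff.2 fun j _ hj => hf j hj.2
      rw [h1, h2, Finset.card_empty, Finset.card_empty]
    · by_cases hr : r.Prime
      · obtain ⟨k', rfl⟩ := Nat.exists_eq_add_of_lt hk
        have h5 := hE r hr k'
        rw [hEG, hEH] at h5
        simpa using h5
      · have h1 : (univ.filter fun i : ι => p i = r ∧ e i = k) = ∅ :=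
          Finset.filter_eq_empty_iff.2 fun i _ hi => hr (hi.1 ▸ hp i)
        have h2 : (univ.filter fun j : κ => q j = r ∧ f j = k) = ∅ :=
          Finset.filter_eq_empty_iff.2 fun j _ hj => hr (hj.1 ▸ hq j)
        rw [h1, h2, Finset.card_empty, Finset.card_empty]
  -- the bijection of index types
  let σ : ι ≃ κ := Equiv.ofFiberEquiv (f := fun i => (p i, e i)) (g := fun j => (q j, f j))
    (fun v => Fintype.equivOfCardEq (hfib v))
  have hσ : ∀ i, (q (σ i), f (σ i)) = (p i, e i) := fun i =>
    Equiv.ofFiberEquiv_map (f := fun i => (p i, e i)) (g := fun j => (q j, f j)) _ i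
  have key : ∀ i, p i ^ e i = q (σ i) ^ f (σ i) := by
    intro i
    have h1 := hσ i
    rw [Prod.mk.injEq] at h1
    rw [h1.1, h1.2]
  -- assemble the isomorphism
  have eA : ((i : ι) → ZMod (p i ^ e i)) ≃+* ((j : κ) → ZMod (q j ^ f j)) :=
    (RingEquiv.piCongrRight fun i => ZMod.ringEquivCongr (key i)).trans
      (RingEquiv.piCongrLeft (fun j => ZMod (q j ^ f j)) σ)
  exact ⟨fG.trans <| (MulEquiv.piMultiplicative _).symm.trans <|
    (AddEquiv.toMultiplicative eA.toAddEquiv).trans <|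
    (MulEquiv.piMultiplicative _).trans fH.symm⟩



theorem stmt_10 {G H : Type*} [CommGroup G] [CommGroup H] [Fintype G] [Fintype H]
    (h : Nonempty (enhancedPowerGraph G ≃g enhancedPowerGraph H)) :
    Nonempty (G ≃* H) := by
  classical
  obtain ⟨φ⟩ := h
  apply main2
  intro n
  have e1 := myCardRootsInt (G := G) n
  have e2 := myCardRootsInt (G := H) n
  have e3 := mySumTransport φ n
  have e4 : #(Finset.univ.filter fun x : G => x ^ n = 1)
      = #(Finset.univ.filter fun x : H => x ^ n = 1) := by
    exact_mod_cast e1.trans (e3.trans e2.symm)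
  rw [rc, rc, Nat.card_eq_fintype_card, Nat.card_eq_fintype_card,
    Fintype.card_subtype, Fintype.card_subtype]
  exact e4
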